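/- Let T be a bounded operator on a complex Banach space satisfying the Kreiss resolvent condition ‖(λI - T)^{-1}‖ ≤ c(|λ|-1)^{-1} for all |λ| > 1. Then ‖(μI + (I-T))^{-1}‖ ≤ c (Re μ)^{-1} for all μ with Re μ > 0; in particular I - T is a sectorial operator of type π/2. -/

import Mathlib

open Real

/-- A bounded operator `V` is sectorial of type `ω ∈ [0, π)` if its spectrum lies in the
closed sector of half-angle `ω` and `‖λ(λ+V)⁻¹‖` is uniformly bounded on each sector
`|Arg λ| < π - ω - ε`. -/
def IsSectorialOfType {X : Type*} [NormedAddCommGroup X] [NormedSpace ℂ X]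
    [CompleteSpace X] (V : X →L[ℂ] X) (ω : ℝ) : Prop :=
  (∀ z ∈ spectrum ℂ V, z = 0 ∨ |z.arg| ≤ ω) ∧
  ∀ ε ∈ Set.Ioo 0 (π - ω), ∃ M : ℝ, ∀ lam : ℂ, lam ≠ 0 → |lam.arg| < π - ω - ε →
    IsUnit (algebraMap ℂ (X →L[ℂ] X) lam + V) ∧
    ‖lam • Ring.inverse (algebraMap ℂ (X →L[ℂ] X) lam + V)‖ ≤ M

/-- if `T` satisfies the Kreiss resolvent condition
`‖(λ-T)⁻¹‖ ≤ c(|λ|-1)⁻¹` for `|λ| > 1`, then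
`‖(μ + (1-T))⁻¹‖ ≤ c (Re μ)⁻¹` for `Re μ > 0`; in particular `1 - T` is sectorial of
type `π/2`. -/
theorem kreiss_implies_halfplane_bound
    {X : Type*} [NormedAddCommGroup X] [NormedSpace ℂ X] [CompleteSpace X]
    (T : X →L[ℂ] X) (c : ℝ)
    (hK : ∀ lam : ℂ, 1 < ‖lam‖ →
      IsUnit (algebraMap ℂ (X →L[ℂ] X) lam - T) ∧
      ‖Ring.inverse (algebraMap ℂ (X →L[ℂ] X) lam - T)‖ ≤ c * (‖lam‖ - 1)⁻¹) :
    (∀ μ : ℂ, 0 < μ.re →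
      IsUnit (algebraMap ℂ (X →L[ℂ] X) μ + (1 - T)) ∧
      ‖Ring.inverse (algebraMap ℂ (X →L[ℂ] X) μ + (1 - T))‖ ≤ c * (μ.re)⁻¹) ∧
    IsSectorialOfType (1 - T) (π / 2) := by
  have hc : 0 ≤ c := by
    have h2 := (hK 2 (by norm_num)).2
    have hn := norm_nonneg (Ring.inverse (algebraMap ℂ (X →L[ℂ] X) 2 - T))
    have : ‖(2 : ℂ)‖ = 2 := by norm_num
    rw [this] at h2
    nlinarith
  have main : ∀ μ : ℂ, 0 < μ.re →
      IsUnit (algebraMap ℂ (X →L[ℂ] X) μ + (1 - T)) ∧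
      ‖Ring.inverse (algebraMap ℂ (X →L[ℂ] X) μ + (1 - T))‖ ≤ c * (μ.re)⁻¹ := by
    intro μ hμ
    have hre : μ.re + 1 ≤ ‖μ + 1‖ := by
      have := Complex.re_le_norm (μ + 1)
      simpa using this
    have habs : 1 < ‖μ + 1‖ := by linarith
    have heq : algebraMap ℂ (X →L[ℂ] X) μ + (1 - T)
        = algebraMap ℂ (X →L[ℂ] X) (μ + 1) - T := by
      rw [map_add, map_one, add_sub_assoc]
    obtain ⟨hu, hb⟩ := hK (μ + 1) habs
    rw [heq]
    refine ⟨hu, hb.trans ?_⟩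
    have h1 : (‖μ + 1‖ - 1)⁻¹ ≤ (μ.re)⁻¹ := by
      apply inv_anti₀ hμ
      linarith
    exact mul_le_mul_of_nonneg_left h1 hc
  refine ⟨main, ?_, ?_⟩
  · -- spectrum
    intro z hz
    rcases eq_or_ne z 0 with h0 | h0
    · exact Or.inl h0
    right
    rw [Complex.abs_arg_le_pi_div_two_iff]
    by_contra hlt
    push_neg at hlt
    have habs : 1 < ‖1 - z‖ := by
      have := Complex.re_le_norm (1 - z)
      simp only [Complex.sub_re, Complex.one_re] at this
      linarith
    have hu := (hK (1 - z) habs).1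
    have heq : algebraMap ℂ (X →L[ℂ] X) (1 - z) - T
        = -(algebraMap ℂ (X →L[ℂ] X) z - (1 - T)) := by
      rw [map_sub, map_one]
      abel
    rw [heq] at hu
    exact (spectrum.mem_iff.mp hz) (by simpa using hu.neg)
  · -- resolvent bound on sectors
    intro ε hε
    refine ⟨c / Real.sin ε, ?_⟩
    intro lam hlam harg
    have hεπ : ε < π / 2 := by
      have := hε.2; linarith
    have hsin : 0 < Real.sin ε :=
      Real.sin_pos_of_pos_of_lt_pi hε.1 (by linarith [Real.pi_pos])
    have harg2 : |lam.arg| < π / 2 - ε := by linarith [harg]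
    have hcos : Real.sin ε ≤ Real.cos lam.arg := by
      rw [← Real.cos_abs, ← Real.cos_pi_div_two_sub]
      apply Real.cos_le_cos_of_nonneg_of_le_pi (abs_nonneg _)
        (by linarith [Real.pi_pos, hε.1]) (le_of_lt harg2)
    have hcospos : 0 < Real.cos lam.arg := lt_of_lt_of_le hsin hcos
    have habs : 0 < ‖lam‖ := norm_pos_iff.mpr hlam
    have hrel : lam.re = ‖lam‖ * Real.cos lam.arg := by
      rw [Complex.cos_arg hlam]
      field_simp
    have hre : 0 < lam.re := by
      rw [hrel]; positivity
    obtain ⟨hu, hb⟩ := main lam hre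
    refine ⟨hu, ?_⟩
    have hns : ‖lam • Ring.inverse (algebraMap ℂ (X →L[ℂ] X) lam + (1 - T))‖
        = ‖lam‖ * ‖Ring.inverse (algebraMap ℂ (X →L[ℂ] X) lam + (1 - T))‖ :=
      (norm_smul lam (Ring.inverse (algebraMap ℂ (X →L[ℂ] X) lam + (1 - T)))).trans (by simp)
    rw [hns]
    calc ‖lam‖ * ‖Ring.inverse (algebraMap ℂ (X →L[ℂ] X) lam + (1 - T))‖
        ≤ ‖lam‖ * (c * (lam.re)⁻¹) :=
          mul_le_mul_of_nonneg_left hb habs.le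
      _ = c * (Real.cos lam.arg)⁻¹ := by
          rw [hrel, mul_inv]
          field_simp
      _ ≤ c / Real.sin ε := by
          rw [div_eq_mul_inv]
          exact mul_le_mul_of_nonneg_left (inv_anti₀ hsin hcos) hc
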